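/- Let n ≥ 5. The subgraph Γ(V) of the block transposition graph Γ induced on the vertex set V is Hamiltonian: it contains a cycle passing through every vertex of V exactly once. -/

import Mathlib

/-- Auxiliary function: the action of the block transposition with cut points
`(i,j,k)` on `{1,…,n}`, written 1-based. -/
def btFun (i j k t : ℕ) : ℕ :=
  if t ≤ i ∨ k < t then t
  else if t ≤ k - j + i then t + j - i
  else t + j - k

theorem btFun_lb {i j k t : ℕ} (h1 : 1 ≤ t) : 1 ≤ btFun i j k t := by
  unfold btFun; split_ifs <;> omega

theorem btFun_ub {i j k t n : ℕ} (ht : t ≤ n) (hjk : j ≤ k) (hkn : k ≤ n) :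
    btFun i j k t ≤ n := by
  unfold btFun; split_ifs <;> omega

theorem btFun_inv {i j k : ℕ} (hij : i < j) (hjk : j < k) (t : ℕ) :
    btFun i (k - j + i) k (btFun i j k t) = t := by
  unfold btFun; split_ifs <;> omega

theorem btFun_inv' {i j k : ℕ} (hij : i < j) (hjk : j < k) (t : ℕ) :
    btFun i j k (btFun i (k - j + i) k t) = t := by
  have h := btFun_inv (i := i) (j := k - j + i) (k := k) (by omega) (by omega) t
  have e : k - (k - j + i) + i = j := by omega
  rwa [e] at h

/-- The block transposition `σ(i,j,k)` as a permutation of `Fin n`,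
where `t : Fin n` encodes the element `t.val + 1` of `{1,…,n}`. -/
def blockT (n i j k : ℕ) (hij : i < j) (hjk : j < k) (hkn : k ≤ n) :
    Equiv.Perm (Fin n) where
  toFun t := ⟨btFun i j k (t.1 + 1) - 1, by
    have h0 := t.isLt
    have h1 := btFun_lb (i := i) (j := j) (k := k) (t := t.1 + 1) (by omega)
    have h2 := btFun_ub (i := i) (j := j) (k := k) (t := t.1 + 1) (n := n)
      (by omega) (by omega) hkn
    omega⟩
  invFun t := ⟨btFun i (k - j + i) k (t.1 + 1) - 1, by
    have h0 := t.isLt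
    have h1 := btFun_lb (i := i) (j := k - j + i) (k := k) (t := t.1 + 1) (by omega)
    have h2 := btFun_ub (i := i) (j := k - j + i) (k := k) (t := t.1 + 1) (n := n)
      (by omega) (by omega) hkn
    omega⟩
  left_inv t := by
    have h1 := btFun_lb (i := i) (j := j) (k := k) (t := t.1 + 1) (by omega)
    have h2 := btFun_inv hij hjk (t.1 + 1)
    apply Fin.ext
    simp only
    have h3 : btFun i j k (t.1 + 1) - 1 + 1 = btFun i j k (t.1 + 1) := by omega
    rw [h3, h2]
    omega
  right_inv t := by
    have h1 := btFun_lb (i := i) (j := k - j + i) (k := k) (t := t.1 + 1) (by omega)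
    have h2 := btFun_inv' hij hjk (t.1 + 1)
    apply Fin.ext
    simp only
    have h3 : btFun i (k - j + i) k (t.1 + 1) - 1 + 1 = btFun i (k - j + i) k (t.1 + 1) := by
      omega
    rw [h3, h2]
    omega

/-- `T_n`: the set of all block transpositions on `{1,…,n}`. -/
def blockTranspositions (n : ℕ) : Set (Equiv.Perm (Fin n)) :=
  {π | ∃ (i j k : ℕ) (hij : i < j) (hjk : j < k) (hkn : k ≤ n),
      blockT n i j k hij hjk hkn = π}

theorem blockT_inv {n i j k : ℕ} (hij : i < j) (hjk : j < k) (hkn : k ≤ n) :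
    (blockT n i j k hij hjk hkn)⁻¹
      = blockT n i (k - j + i) k (by omega) (by omega) hkn :=
  Equiv.ext fun _ => rfl

theorem blockTranspositions_inv_mem {n : ℕ} {π : Equiv.Perm (Fin n)}
    (h : π ∈ blockTranspositions n) : π⁻¹ ∈ blockTranspositions n := by
  obtain ⟨i, j, k, hij, hjk, hkn, rfl⟩ := h
  exact ⟨i, k - j + i, k, by omega, by omega, hkn, (blockT_inv hij hjk hkn).symm⟩

/-- The Cayley graph `Cay(Sym_n, T_n)`. -/
def cayleyT (n : ℕ) : SimpleGraph (Equiv.Perm (Fin n)) where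
  Adj π ρ := π ≠ ρ ∧ π⁻¹ * ρ ∈ blockTranspositions n
  symm := by
    constructor
    rintro π ρ ⟨hne, hmem⟩
    refine ⟨hne.symm, ?_⟩
    have h := blockTranspositions_inv_mem hmem
    rwa [mul_inv_rev, inv_inv] at h
  loopless := ⟨fun π h => h.1 rfl⟩
/-- The pair `e_m`, `0 ≤ m ≤ n`. -/
def epair (n : ℕ) (hn : 5 ≤ n) (m : ℕ) (hm : m ≤ n) : Set (Equiv.Perm (Fin n)) :=
  if h : m ≤ n - 3 then
    {blockT n m (m + 1) (m + 3) (by omega) (by omega) (by omega),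
     blockT n m (m + 2) (m + 3) (by omega) (by omega) (by omega)}
  else if h2 : m = n - 2 then
    {blockT n 0 (n - 2) (n - 1) (by omega) (by omega) (by omega),
     blockT n 0 (n - 2) n (by omega) (by omega) (by omega)}
  else if h3 : m = n - 1 then
    {blockT n 1 (n - 1) n (by omega) (by omega) (by omega),
     blockT n 0 1 (n - 1) (by omega) (by omega) (by omega)}
  else
    {blockT n 0 2 n (by omega) (by omega) (by omega),
     blockT n 1 2 n (by omega) (by omega) (by omega)}

/-- `V`: the set of the `2(n+1)` endpoints of the pairs `e_0, …, e_n`. -/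
def Vset (n : ℕ) (hn : 5 ≤ n) : Set (Equiv.Perm (Fin n)) :=
  {π | ∃ (m : ℕ) (hm : m ≤ n), π ∈ epair n hn m hm}

/-! ### Auxiliary development for Statement 18 -/

theorem btFun_ub' {i j k t n : ℕ} (ht : t ≤ n) (hjk : j ≤ k) (hkn : k ≤ n) :
    btFun i j k t ≤ n := by
  unfold btFun; split_ifs <;> omega

/-- Block transpositions are determined by their cut points. -/
theorem blockT_inj {n i j k i' j' k' : ℕ} {h1 : i < j} {h2 : j < k} {h3 : k ≤ n}
    {h1' : i' < j'} {h2' : j' < k'} {h3' : k' ≤ n}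
    (h : blockT n i j k h1 h2 h3 = blockT n i' j' k' h1' h2' h3') :
    i = i' ∧ j = j' ∧ k = k' := by
  have key : ∀ t, 1 ≤ t → t ≤ n → btFun i j k t = btFun i' j' k' t := by
    intro t ht1 ht2
    have h0 := congrArg (fun e : Equiv.Perm (Fin n) => (e ⟨t - 1, by omega⟩ : Fin n).1) h
    simp only [blockT, Equiv.coe_fn_mk] at h0
    have e1 : t - 1 + 1 = t := by omega
    rw [e1] at h0
    have l1 := btFun_lb (i := i) (j := j) (k := k) (t := t) (by omega)
    have l2 := btFun_lb (i := i') (j := j') (k := k') (t := t) (by omega)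
    omega
  have v1 : btFun i j k (i+1) = j+1 := by unfold btFun; split_ifs <;> omega
  have v2 : btFun i' j' k' (i'+1) = j'+1 := by unfold btFun; split_ifs <;> omega
  have hi : i = i' := by
    rcases Nat.lt_trichotomy i i' with hc | hc | hc
    · have hk := key (i+1) (by omega) (by omega)
      rw [v1] at hk
      have : btFun i' j' k' (i+1) = i+1 := by unfold btFun; split_ifs <;> omega
      omega
    · exact hc
    · have hk := key (i'+1) (by omega) (by omega)
      rw [v2] at hk
      have : btFun i j k (i'+1) = i'+1 := by unfold btFun; split_ifs <;> omega
      omega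
  subst hi
  have hj : j = j' := by
    have hk := key (i+1) (by omega) (by omega)
    rw [v1, v2] at hk; omega
  subst hj
  have v3 : btFun i j k k = j := by unfold btFun; split_ifs <;> omega
  have v4 : btFun i j k' k' = j := by unfold btFun; split_ifs <;> omega
  have hkk : k = k' := by
    rcases Nat.lt_trichotomy k k' with hc | hc | hc
    · have he := key k (by omega) (by omega)
      rw [v3] at he; unfold btFun at he; split_ifs at he <;> omega
    · exact hc
    · have he := key k' (by omega) (by omega)
      rw [v4] at he; unfold btFun at he; split_ifs at he <;> omega
  exact ⟨rfl, rfl, hkk⟩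

/-- Helper producing adjacency in the Cayley graph from a witness block transposition. -/
theorem adj_helper (n : ℕ) {i1 j1 k1 i2 j2 k2 : ℕ} (iw jw kw : ℕ)
    {h11 : i1 < j1} {h12 : j1 < k1} {h13 : k1 ≤ n}
    {h21 : i2 < j2} {h22 : j2 < k2} {h23 : k2 ≤ n}
    (hw1 : iw < jw) (hw2 : jw < kw) (hw3 : kw ≤ n)
    (hfun : ∀ t, 1 ≤ t → t ≤ n → btFun i1 j1 k1 (btFun iw jw kw t) = btFun i2 j2 k2 t) :
    (cayleyT n).Adj (blockT n i1 j1 k1 h11 h12 h13) (blockT n i2 j2 k2 h21 h22 h23) := by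
  have hmul : blockT n i1 j1 k1 h11 h12 h13 * blockT n iw jw kw hw1 hw2 hw3
      = blockT n i2 j2 k2 h21 h22 h23 := by
    apply Equiv.ext
    intro t
    rw [Equiv.Perm.mul_apply]
    apply Fin.ext
    show btFun i1 j1 k1 (btFun iw jw kw (t.1+1) - 1 + 1) - 1 = btFun i2 j2 k2 (t.1+1) - 1
    have hlb := btFun_lb (i := iw) (j := jw) (k := kw) (t := t.1+1) (by omega)
    have hIt := t.isLt
    rw [Nat.sub_add_cancel hlb, hfun _ (by omega) (by omega)]
  have hmem : (blockT n i1 j1 k1 h11 h12 h13)⁻¹ * blockT n i2 j2 k2 h21 h22 h23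
      = blockT n iw jw kw hw1 hw2 hw3 := by
    rw [← hmul]; exact inv_mul_cancel_left _ _
  show _ ≠ _ ∧ _ ∈ blockTranspositions n
  constructor
  · intro he
    have hone : blockT n iw jw kw hw1 hw2 hw3 = 1 := by
      rw [← hmem, ← he, inv_mul_cancel]
    have h2 : ((blockT n iw jw kw hw1 hw2 hw3) ⟨iw, by omega⟩ : Fin n).1 = iw := by
      rw [hone]; rfl
    have h3 : btFun iw jw kw (iw+1) - 1 = iw := h2
    unfold btFun at h3; split_ifs at h3 <;> omega
  · rw [hmem]; exact ⟨iw, jw, kw, hw1, hw2, hw3, rfl⟩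

/-- First endpoint of the pair `e_m` (total in `m`). -/
def APm (n : ℕ) (hn : 5 ≤ n) (m : ℕ) : Equiv.Perm (Fin n) :=
  if h : m ≤ n - 3 then blockT n m (m + 1) (m + 3) (by omega) (by omega) (by omega)
  else if h2 : m = n - 2 then blockT n 0 (n - 2) (n - 1) (by omega) (by omega) (by omega)
  else if h3 : m = n - 1 then blockT n 1 (n - 1) n (by omega) (by omega) (by omega)
  else blockT n 0 2 n (by omega) (by omega) (by omega)

/-- Second endpoint of the pair `e_m` (total in `m`). -/
def BPm (n : ℕ) (hn : 5 ≤ n) (m : ℕ) : Equiv.Perm (Fin n) :=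
  if h : m ≤ n - 3 then blockT n m (m + 2) (m + 3) (by omega) (by omega) (by omega)
  else if h2 : m = n - 2 then blockT n 0 (n - 2) n (by omega) (by omega) (by omega)
  else if h3 : m = n - 1 then blockT n 0 1 (n - 1) (by omega) (by omega) (by omega)
  else blockT n 1 2 n (by omega) (by omega) (by omega)

theorem APm_mem_epair (n : ℕ) (hn : 5 ≤ n) (m : ℕ) (hm : m ≤ n) :
    APm n hn m ∈ epair n hn m hm := by
  unfold APm epair; split_ifs <;> simp

theorem BPm_mem_epair (n : ℕ) (hn : 5 ≤ n) (m : ℕ) (hm : m ≤ n) :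
    BPm n hn m ∈ epair n hn m hm := by
  unfold BPm epair; split_ifs <;> simp

theorem epair_elem {n : ℕ} {hn : 5 ≤ n} {m : ℕ} {hm : m ≤ n} {π : Equiv.Perm (Fin n)}
    (h : π ∈ epair n hn m hm) : π = APm n hn m ∨ π = BPm n hn m := by
  unfold APm BPm
  unfold epair at h
  split_ifs at h ⊢ <;> simpa using h

theorem APm_mem_Vset (n : ℕ) (hn : 5 ≤ n) (m : ℕ) : APm n hn m ∈ Vset n hn := by
  by_cases hm : m ≤ n
  · exact ⟨m, hm, APm_mem_epair n hn m hm⟩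
  · have he : APm n hn m = APm n hn n := by
      unfold APm; split_ifs <;> first | rfl | omega
    rw [he]; exact ⟨n, le_rfl, APm_mem_epair n hn n le_rfl⟩

theorem BPm_mem_Vset (n : ℕ) (hn : 5 ≤ n) (m : ℕ) : BPm n hn m ∈ Vset n hn := by
  by_cases hm : m ≤ n
  · exact ⟨m, hm, BPm_mem_epair n hn m hm⟩
  · have he : BPm n hn m = BPm n hn n := by
      unfold BPm; split_ifs <;> first | rfl | omega
    rw [he]; exact ⟨n, le_rfl, BPm_mem_epair n hn n le_rfl⟩

theorem APm_inj {n : ℕ} {hn : 5 ≤ n} {m m' : ℕ} (hm : m ≤ n) (hm' : m' ≤ n)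
    (h : APm n hn m = APm n hn m') : m = m' := by
  unfold APm at h
  split_ifs at h <;> (obtain ⟨e1, e2, e3⟩ := blockT_inj h; omega)

theorem BPm_inj {n : ℕ} {hn : 5 ≤ n} {m m' : ℕ} (hm : m ≤ n) (hm' : m' ≤ n)
    (h : BPm n hn m = BPm n hn m') : m = m' := by
  unfold BPm at h
  split_ifs at h <;> (obtain ⟨e1, e2, e3⟩ := blockT_inj h; omega)

theorem APm_ne_BPm {n : ℕ} {hn : 5 ≤ n} (m m' : ℕ) (hm : m ≤ n) (hm' : m' ≤ n) :
    APm n hn m ≠ BPm n hn m' := by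
  intro h
  unfold APm BPm at h
  split_ifs at h <;> (obtain ⟨e1, e2, e3⟩ := blockT_inj h; omega)

theorem APm_eq1 {n : ℕ} {hn : 5 ≤ n} {m : ℕ} (h : m ≤ n - 3) :
    APm n hn m = blockT n m (m + 1) (m + 3) (by omega) (by omega) (by omega) := by
  unfold APm; rw [dif_pos h]

theorem APm_eq2 {n : ℕ} {hn : 5 ≤ n} {m : ℕ} (h : m = n - 2) :
    APm n hn m = blockT n 0 (n - 2) (n - 1) (by omega) (by omega) (by omega) := by
  unfold APm; rw [dif_neg (by omega), dif_pos h]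

theorem APm_eq3 {n : ℕ} {hn : 5 ≤ n} {m : ℕ} (h : m = n - 1) :
    APm n hn m = blockT n 1 (n - 1) n (by omega) (by omega) (by omega) := by
  unfold APm; rw [dif_neg (by omega), dif_neg (by omega), dif_pos h]

theorem APm_eq4 {n : ℕ} {hn : 5 ≤ n} {m : ℕ} (h : m = n) :
    APm n hn m = blockT n 0 2 n (by omega) (by omega) (by omega) := by
  unfold APm; rw [dif_neg (by omega), dif_neg (by omega), dif_neg (by omega)]

theorem BPm_eq1 {n : ℕ} {hn : 5 ≤ n} {m : ℕ} (h : m ≤ n - 3) :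
    BPm n hn m = blockT n m (m + 2) (m + 3) (by omega) (by omega) (by omega) := by
  unfold BPm; rw [dif_pos h]

theorem BPm_eq2 {n : ℕ} {hn : 5 ≤ n} {m : ℕ} (h : m = n - 2) :
    BPm n hn m = blockT n 0 (n - 2) n (by omega) (by omega) (by omega) := by
  unfold BPm; rw [dif_neg (by omega), dif_pos h]

theorem BPm_eq3 {n : ℕ} {hn : 5 ≤ n} {m : ℕ} (h : m = n - 1) :
    BPm n hn m = blockT n 0 1 (n - 1) (by omega) (by omega) (by omega) := by
  unfold BPm; rw [dif_neg (by omega), dif_neg (by omega), dif_pos h]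

theorem BPm_eq4 {n : ℕ} {hn : 5 ≤ n} {m : ℕ} (h : m = n) :
    BPm n hn m = blockT n 1 2 n (by omega) (by omega) (by omega) := by
  unfold BPm; rw [dif_neg (by omega), dif_neg (by omega), dif_neg (by omega)]

/-- Adjacency within a pair: `a_m` is adjacent to `b_m`. -/
theorem adjPair (n : ℕ) (hn : 5 ≤ n) (m : ℕ) (hm : m ≤ n) :
    (cayleyT n).Adj (APm n hn m) (BPm n hn m) := by
  have hc : m ≤ n - 3 ∨ m = n - 2 ∨ m = n - 1 ∨ m = n := by omega
  rcases hc with hc | hc | hc | hc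
  · rw [APm_eq1 hc, BPm_eq1 hc]
    exact adj_helper n m (m+1) (m+3) (by omega) (by omega) (by omega)
      (by intro t h1 h2; unfold btFun; split_ifs <;> omega)
  · rw [APm_eq2 hc, BPm_eq2 hc]
    exact adj_helper n 1 (n-1) n (by omega) (by omega) (by omega)
      (by intro t h1 h2; unfold btFun; split_ifs <;> omega)
  · rw [APm_eq3 hc, BPm_eq3 hc]
    exact adj_helper n 0 2 n (by omega) (by omega) (by omega)
      (by intro t h1 h2; unfold btFun; split_ifs <;> omega)
  · rw [APm_eq4 hc, BPm_eq4 hc]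
    exact adj_helper n 0 (n-2) (n-1) (by omega) (by omega) (by omega)
      (by intro t h1 h2; unfold btFun; split_ifs <;> omega)

/-- Adjacency between consecutive pairs: `a_m` is adjacent to `b_{m+1}`. -/
theorem adjStep (n : ℕ) (hn : 5 ≤ n) (m m' : ℕ) (h : m' = m + 1) (hm' : m' ≤ n) :
    (cayleyT n).Adj (APm n hn m) (BPm n hn m') := by
  subst h
  have hc : m + 1 ≤ n - 3 ∨ m + 1 = n - 2 ∨ m + 1 = n - 1 ∨ m + 1 = n := by omega
  rcases hc with hc | hc | hc | hc
  · rw [APm_eq1 (by omega), BPm_eq1 (by omega : m + 1 ≤ n - 3)]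
    exact adj_helper n m (m+2) (m+4) (by omega) (by omega) (by omega)
      (by intro t h1 h2; unfold btFun; split_ifs <;> omega)
  · rw [APm_eq1 (by omega), BPm_eq2 hc]
    exact adj_helper n 0 (n-3) (n-1) (by omega) (by omega) (by omega)
      (by intro t h1 h2; unfold btFun; split_ifs <;> omega)
  · rw [APm_eq2 (by omega), BPm_eq3 hc]
    exact adj_helper n 0 2 (n-1) (by omega) (by omega) (by omega)
      (by intro t h1 h2; unfold btFun; split_ifs <;> omega)
  · rw [APm_eq3 (by omega), BPm_eq4 hc]
    exact adj_helper n 1 3 n (by omega) (by omega) (by omega)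
      (by intro t h1 h2; unfold btFun; split_ifs <;> omega)

/-- Adjacency closing the cycle: `a_n` is adjacent to `b_0`. -/
theorem adjLast (n : ℕ) (hn : 5 ≤ n) :
    (cayleyT n).Adj (APm n hn n) (BPm n hn 0) := by
  rw [APm_eq4 rfl, BPm_eq1 (by omega : (0:ℕ) ≤ n - 3)]
  exact adj_helper n 1 (n-2) n (by omega) (by omega) (by omega)
    (by intro t h1 h2; unfold btFun; split_ifs <;> omega)

/-- The vertex `a_m` of `Γ(V)`. -/
def Axv (n : ℕ) (hn : 5 ≤ n) (m : ℕ) : ↥(Vset n hn) := ⟨APm n hn m, APm_mem_Vset n hn m⟩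

/-- The vertex `b_m` of `Γ(V)`. -/
def Bxv (n : ℕ) (hn : 5 ≤ n) (m : ℕ) : ↥(Vset n hn) := ⟨BPm n hn m, BPm_mem_Vset n hn m⟩

theorem Axv_ne_Bxv (n : ℕ) (hn : 5 ≤ n) (m m' : ℕ) (hm : m ≤ n) (hm' : m' ≤ n) :
    Axv n hn m ≠ Bxv n hn m' := fun h =>
  APm_ne_BPm (hn := hn) m m' hm hm' (congrArg Subtype.val h)

theorem Axv_inj {n : ℕ} {hn : 5 ≤ n} {m m' : ℕ} (hm : m ≤ n) (hm' : m' ≤ n)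
    (h : Axv n hn m = Axv n hn m') : m = m' :=
  APm_inj (hn := hn) hm hm' (congrArg Subtype.val h)

theorem Bxv_inj {n : ℕ} {hn : 5 ≤ n} {m m' : ℕ} (hm : m ≤ n) (hm' : m' ≤ n)
    (h : Bxv n hn m = Bxv n hn m') : m = m' :=
  BPm_inj (hn := hn) hm hm' (congrArg Subtype.val h)

theorem gadj_BA (n : ℕ) (hn : 5 ≤ n) (m : ℕ) (hm : m ≤ n) :
    (SimpleGraph.induce (Vset n hn) (cayleyT n)).Adj (Bxv n hn m) (Axv n hn m) :=
  ((adjPair n hn m hm).symm : (cayleyT n).Adj _ _)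

theorem gadj_AB (n : ℕ) (hn : 5 ≤ n) (m m' : ℕ) (h : m' = m + 1) (hm' : m' ≤ n) :
    (SimpleGraph.induce (Vset n hn) (cayleyT n)).Adj (Axv n hn m) (Bxv n hn m') :=
  (adjStep n hn m m' h hm' : (cayleyT n).Adj _ _)

theorem gadj_An_B0 (n : ℕ) (hn : 5 ≤ n) :
    (SimpleGraph.induce (Vset n hn) (cayleyT n)).Adj (Axv n hn n) (Bxv n hn 0) :=
  (adjLast n hn : (cayleyT n).Adj _ _)

/-- The path `a_{n-d}, b_{n-d+1}, a_{n-d+1}, …, a_n, b_0` in `Γ(V)`. -/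
def chainW (n : ℕ) (hn : 5 ≤ n) :
    (d : ℕ) → d ≤ n →
      (SimpleGraph.induce (Vset n hn) (cayleyT n)).Walk (Axv n hn (n - d)) (Bxv n hn 0)
  | 0, _ => SimpleGraph.Walk.cons (gadj_An_B0 n hn) SimpleGraph.Walk.nil
  | d+1, hd =>
      SimpleGraph.Walk.cons (gadj_AB n hn (n-(d+1)) (n-d) (by omega) (by omega))
        (SimpleGraph.Walk.cons (gadj_BA n hn (n-d) (by omega)) (chainW n hn d (by omega)))

/-- The support list of `chainW`. -/
def suppL (n : ℕ) (hn : 5 ≤ n) : ℕ → List ↥(Vset n hn)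
  | 0 => [Axv n hn n, Bxv n hn 0]
  | d+1 => Axv n hn (n-(d+1)) :: Bxv n hn (n-d) :: suppL n hn d

theorem chainW_support (n : ℕ) (hn : 5 ≤ n) :
    ∀ d (hd : d ≤ n), (chainW n hn d hd).support = suppL n hn d := by
  intro d
  induction d with
  | zero => intro hd; simp [chainW, suppL]
  | succ d ih => intro hd; simp [chainW, suppL, ih (by omega)]

theorem mem_suppL (n : ℕ) (hn : 5 ≤ n) (x : ↥(Vset n hn)) :
    ∀ d, d ≤ n →
      (x ∈ suppL n hn d ↔
        (∃ m, n - d ≤ m ∧ m ≤ n ∧ x = Axv n hn m) ∨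
        (∃ m, n - d < m ∧ m ≤ n ∧ x = Bxv n hn m) ∨ x = Bxv n hn 0) := by
  intro d
  induction d with
  | zero =>
    intro hd
    simp only [suppL, List.mem_cons, List.mem_singleton, List.not_mem_nil, or_false]
    constructor
    · rintro (rfl | rfl)
      · exact Or.inl ⟨n, by omega, le_rfl, rfl⟩
      · exact Or.inr (Or.inr rfl)
    · rintro (⟨m, h1, h2, rfl⟩ | ⟨m, h1, h2, rfl⟩ | rfl)
      · have hmn : m = n := by omega
        exact Or.inl (by rw [hmn])
      · omega
      · exact Or.inr rfl
  | succ d ih =>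
    intro hd
    simp only [suppL, List.mem_cons]
    rw [ih (by omega)]
    constructor
    · rintro (rfl | rfl | (⟨m, h1, h2, rfl⟩ | ⟨m, h1, h2, rfl⟩ | rfl))
      · exact Or.inl ⟨n - (d+1), le_rfl, by omega, rfl⟩
      · exact Or.inr (Or.inl ⟨n - d, by omega, by omega, rfl⟩)
      · exact Or.inl ⟨m, by omega, h2, rfl⟩
      · exact Or.inr (Or.inl ⟨m, by omega, h2, rfl⟩)
      · exact Or.inr (Or.inr rfl)
    · rintro (⟨m, h1, h2, rfl⟩ | ⟨m, h1, h2, rfl⟩ | rfl)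
      · by_cases hm : m = n - (d+1)
        · exact Or.inl (by rw [hm])
        · exact Or.inr (Or.inr (Or.inl ⟨m, by omega, h2, rfl⟩))
      · by_cases hm : m = n - d
        · exact Or.inr (Or.inl (by rw [hm]))
        · exact Or.inr (Or.inr (Or.inr (Or.inl ⟨m, by omega, h2, rfl⟩)))
      · exact Or.inr (Or.inr (Or.inr (Or.inr rfl)))

theorem suppL_nodup (n : ℕ) (hn : 5 ≤ n) :
    ∀ d, d ≤ n → (suppL n hn d).Nodup := by
  intro d
  induction d with
  | zero =>
    intro hd
    refine List.nodup_cons.2 ⟨?_, List.nodup_singleton _⟩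
    simp only [List.mem_singleton]
    exact Axv_ne_Bxv n hn n 0 le_rfl (by omega)
  | succ d ih =>
    intro hd
    refine List.nodup_cons.2 ⟨?_, List.nodup_cons.2 ⟨?_, ih (by omega)⟩⟩
    · intro hmem
      rcases List.mem_cons.1 hmem with h | h
      · exact Axv_ne_Bxv n hn (n-(d+1)) (n-d) (by omega) (by omega) h
      · rw [mem_suppL n hn _ d (by omega)] at h
        rcases h with ⟨m, h1, h2, he⟩ | ⟨m, h1, h2, he⟩ | he
        · have := Axv_inj (by omega) h2 he; omega
        · exact Axv_ne_Bxv n hn (n-(d+1)) m (by omega) h2 he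
        · exact Axv_ne_Bxv n hn (n-(d+1)) 0 (by omega) (by omega) he
    · intro hmem
      rw [mem_suppL n hn _ d (by omega)] at hmem
      rcases hmem with ⟨m, h1, h2, he⟩ | ⟨m, h1, h2, he⟩ | he
      · exact Axv_ne_Bxv n hn m (n-d) h2 (by omega) he.symm
      · have := Bxv_inj (by omega) h2 he; omega
      · have := Bxv_inj (by omega) (by omega) he; omega

theorem edge_not_mem (n : ℕ) (hn : 5 ≤ n) :
    ∀ d (hd : d ≤ n),
      s(Bxv n hn 0, Axv n hn 0) ∉ (chainW n hn d hd).edges := by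
  intro d
  induction d with
  | zero =>
    intro hd hmem
    simp only [chainW, SimpleGraph.Walk.edges_cons, SimpleGraph.Walk.edges_nil,
      List.mem_singleton, List.mem_cons, List.not_mem_nil, or_false] at hmem
    rcases Sym2.eq_iff.1 hmem with ⟨h1, h2⟩ | ⟨h1, h2⟩
    · exact Axv_ne_Bxv n hn (n-0) 0 (by omega) (by omega) h1.symm
    · have := Axv_inj (n := n) (hn := hn) (by omega) (by omega) h2.symm
      omega
  | succ d ih =>
    intro hd hmem
    simp only [chainW, SimpleGraph.Walk.edges_cons, List.mem_cons] at hmem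
    rcases hmem with h | h | h
    · rcases Sym2.eq_iff.1 h with ⟨h1, h2⟩ | ⟨h1, h2⟩
      · exact Axv_ne_Bxv n hn (n-(d+1)) 0 (by omega) (by omega) h1.symm
      · have := Bxv_inj (n := n) (hn := hn) (by omega) (by omega) h1; omega
    · rcases Sym2.eq_iff.1 h with ⟨h1, h2⟩ | ⟨h1, h2⟩
      · have := Bxv_inj (n := n) (hn := hn) (by omega) (by omega) h1; omega
      · exact Axv_ne_Bxv n hn 0 (n-d) (by omega) (by omega) h2
    · exact ih (by omega) h
/-- For `n ≥ 5`, the induced subgraph `Γ(V)` is Hamiltonian: it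
contains a cycle passing through every vertex of `V` exactly once. -/
theorem stmt_18 (n : ℕ) (hn : 5 ≤ n) :
    ∃ (v : Vset n hn)
      (p : (SimpleGraph.induce (Vset n hn) (cayleyT n)).Walk v v),
      p.IsHamiltonianCycle := by
  have hq0 : Axv n hn (n - n) = Axv n hn 0 := by rw [Nat.sub_self]
  refine ⟨Bxv n hn 0,
    SimpleGraph.Walk.cons (gadj_BA n hn 0 (by omega)) ((chainW n hn n le_rfl).copy hq0 rfl), ?_⟩
  have hsupq : ((chainW n hn n le_rfl).copy hq0 rfl).support = suppL n hn n := by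
    rw [SimpleGraph.Walk.support_copy, chainW_support]
  rw [SimpleGraph.Walk.isHamiltonianCycle_iff_isCycle_and_support_count_tail_eq_one]
  constructor
  · rw [SimpleGraph.Walk.cons_isCycle_iff]
    constructor
    · exact SimpleGraph.Walk.IsPath.mk' (hsupq ▸ suppL_nodup n hn n le_rfl)
    · rw [SimpleGraph.Walk.edges_copy]
      exact edge_not_mem n hn n le_rfl
  · intro a
    rw [SimpleGraph.Walk.support_cons, hsupq, List.tail_cons]
    apply @List.count_eq_one_of_mem _ instBEqOfDecidableEq _ _ _ (suppL_nodup n hn n le_rfl)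
    obtain ⟨π, hπ⟩ := a
    obtain ⟨m, hm, hmem⟩ := hπ
    rw [mem_suppL n hn _ n le_rfl]
    rcases epair_elem hmem with he | he
    · exact Or.inl ⟨m, by omega, hm, Subtype.ext he⟩
    · by_cases hm0 : m = 0
      · subst hm0
        exact Or.inr (Or.inr (Subtype.ext he))
      · exact Or.inr (Or.inl ⟨m, by omega, hm, Subtype.ext he⟩)
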